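/- Let N ∈ ℕ, ε, A_1, …, A_N ∈ ℝ, δ ∈ ℝ \ {0}, and t₀ ∈ ℝ. Let a : ℝ → ℝ be twice differentiable with a(t) > 0 for all t, let φ be differentiable, and let G, G_1, …, G_N : ℝ → ℝ satisfy H'(t) + δH(t)² + εφ'(t)² = G(t) + Σ_{i=1}^N G_i(t)/a(t)^{A_i} for all t, where H = a'/a. Define u(s) = a(s+t₀)^δ, ψ(s) = φ(s+t₀), P(s) = −εδψ'(s)², E(s) = −δG(s+t₀), F_i(s) = δG_i(s+t₀), and C_i = A_i/δ − 1. Then u is positive and twice differentiable, and u''(s) + [E(s) − P(s)]u(s) = Σ_{i=1}^N F_i(s)/u(s)^{C_i} holds for all s ∈ ℝ. -/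

import Mathlib

/-- corollary (A = 0, δ ≠ 0), forward direction. -/
theorem stmt_8
    (N : ℕ) (ε δ t₀ : ℝ) (Ai : Fin N → ℝ) (hδ : δ ≠ 0)
    (a φ G : ℝ → ℝ) (Gi : Fin N → ℝ → ℝ)
    (ha : Differentiable ℝ a) (ha' : Differentiable ℝ (deriv a))
    (hapos : ∀ t, 0 < a t)
    (hφ : Differentiable ℝ φ)
    (hSF : ∀ t, deriv (fun t => deriv a t / a t) t + δ * (deriv a t / a t) ^ 2
        + ε * (deriv φ t) ^ 2 = G t + ∑ i, Gi i t / a t ^ Ai i)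
    (u ψ P E : ℝ → ℝ) (F : Fin N → ℝ → ℝ) (C : Fin N → ℝ)
    (hu : ∀ s, u s = a (s + t₀) ^ δ)
    (hψ : ∀ s, ψ s = φ (s + t₀))
    (hP : ∀ s, P s = -(ε * δ) * (deriv ψ s) ^ 2)
    (hE : ∀ s, E s = -δ * G (s + t₀))
    (hF : ∀ i s, F i s = δ * Gi i (s + t₀))
    (hC : ∀ i, C i = Ai i / δ - 1) :
    (∀ s, 0 < u s) ∧ Differentiable ℝ u ∧ Differentiable ℝ (deriv u) ∧
      ∀ s, deriv (deriv u) s + (E s - P s) * u s = ∑ i, F i s / u s ^ C i := by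
  have hu_eq : u = fun s => a (s + t₀) ^ δ := funext hu
  have hψ_eq : ψ = fun s => φ (s + t₀) := funext hψ
  have hb : ∀ s, HasDerivAt (fun s => a (s + t₀)) (deriv a (s + t₀)) s := fun s => by
    simpa [Function.comp_def] using ((ha (s + t₀)).hasDerivAt.comp s ((hasDerivAt_id s).add_const t₀))
  have hb' : ∀ s, HasDerivAt (fun s => deriv a (s + t₀)) (deriv (deriv a) (s + t₀)) s := fun s => by
    simpa [Function.comp_def] using ((ha' (s + t₀)).hasDerivAt.comp s ((hasDerivAt_id s).add_const t₀))
  have hpow : ∀ (p : ℝ) (s : ℝ), HasDerivAt (fun s => a (s + t₀) ^ p)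
      (p * a (s + t₀) ^ (p - 1) * deriv a (s + t₀)) s := fun p s => by
    simpa [mul_assoc, Function.comp_def] using
      ((Real.hasDerivAt_rpow_const (p := p) (Or.inl (hapos (s + t₀)).ne')).comp s (hb s))
  have hu' : deriv u = fun s => δ * a (s + t₀) ^ (δ - 1) * deriv a (s + t₀) := by
    rw [hu_eq]; exact funext fun s => (hpow δ s).deriv
  have hψ' : ∀ s, deriv ψ s = deriv φ (s + t₀) := fun s => by
    rw [hψ_eq]
    simpa [Function.comp_def] using ((hφ (s + t₀)).hasDerivAt.comp s ((hasDerivAt_id s).add_const t₀)).deriv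
  have hu2 : ∀ s, HasDerivAt (deriv u)
      (δ * a (s + t₀) ^ (δ - 1 - 1) * deriv a (s + t₀) * ((δ - 1) * deriv a (s + t₀))
        + δ * a (s + t₀) ^ (δ - 1) * deriv (deriv a) (s + t₀)) s := fun s => by
    rw [hu']
    have h1 : HasDerivAt (fun s => a (s + t₀) ^ (δ - 1))
        ((δ - 1) * a (s + t₀) ^ (δ - 1 - 1) * deriv a (s + t₀)) s := hpow (δ - 1) s
    have := ((h1.const_mul δ).mul (hb' s))
    exact this.congr_deriv (by ring)
  have hH : ∀ t, deriv (fun t => deriv a t / a t) t =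
      (deriv (deriv a) t * a t - deriv a t * deriv a t) / a t ^ 2 := fun t =>
    ((ha' t).hasDerivAt.div (ha t).hasDerivAt (hapos t).ne').deriv
  refine ⟨fun s => by rw [hu]; exact Real.rpow_pos_of_pos (hapos _) _,
    by rw [hu_eq]; exact fun s => (hpow δ s).differentiableAt,
    fun s => (hu2 s).differentiableAt, fun s => ?_⟩
  rw [(hu2 s).deriv, hE, hP, hψ' s, hu]
  set t := s + t₀ with ht
  set x := a t with hx
  set x' := deriv a t
  set x'' := deriv (deriv a) t
  have hx0 : (0:ℝ) < x := hapos t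
  have key := hSF t
  rw [hH t] at key
  -- rewrite RHS
  have hrhs : ∀ i : Fin N, F i s / (x ^ δ) ^ C i = Gi i t / x ^ Ai i * (δ * x ^ δ) := by
    intro i
    rw [hF, hC, ← Real.rpow_mul hx0.le,
      show δ * (Ai i / δ - 1) = Ai i - δ by field_simp, Real.rpow_sub hx0]
    rw [div_div_eq_mul_div]
    ring
  rw [Finset.sum_congr rfl (fun i _ => hrhs i), ← Finset.sum_mul]
  set S := ∑ i, Gi i t / x ^ Ai i with hS
  have hSval : S = (x'' * x - x' * x') / x ^ 2 + δ * (x' / x) ^ 2 + ε * (deriv φ t) ^ 2 - G t := by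
    linarith [key]
  rw [hSval]
  have e1 : x ^ (δ - 1 - 1) = x ^ δ / (x * x) := by
    rw [show δ - 1 - 1 = δ - 2 by ring, Real.rpow_sub hx0,
      show (2:ℝ) = ((2:ℕ):ℝ) by norm_num, Real.rpow_natCast]
    ring
  have e2 : x ^ (δ - 1) = x ^ δ / x := by
    rw [Real.rpow_sub hx0, Real.rpow_one]
  rw [e1, e2]
  field_simp
  ring
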